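/- arXiv:1704.08184 — 2 statements merged into one kernel-verified Lean document; each statement's English description precedes it below -/
import Mathlib

section
/- Let ω be holomorphic on the open unit disk D with |ω(z)| ≤ 1 for all z ∈ D, let c ∈ ℂ, and set A(z) = 1 + c·z − z·∫₀ᶻ ω(t) dt (segment integral). Then for all z₁, z₂ ∈ D, |z₁·A(z₂) − z₂·A(z₁)| ≥ (1 − |z₁·z₂|)·|z₁ − z₂|. In particular, if z₁ ≠ z₂ then z₁·A(z₂) ≠ z₂·A(z₁), so the map z ↦ z/A(z) is injective on {z ∈ D : A(z) ≠ 0}. -/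
open Complex Metric

/-- Contour integral of `ω` along the straight line segment from `z₁` to `z₂`:
`∫_{z₁}^{z₂} ω(t) dt = (z₂ - z₁) ∫₀¹ ω(z₁ + s (z₂ - z₁)) ds`. -/
noncomputable def segInt (ω : ℂ → ℂ) (z₁ z₂ : ℂ) : ℂ :=
  (z₂ - z₁) * ∫ s in (0:ℝ)..(1:ℝ), ω (z₁ + (s : ℂ) * (z₂ - z₁))

lemma seg_mem_ball {x : ℂ} (hx : ‖x‖ < 1) {s : ℝ} (h0 : 0 ≤ s) (h1 : s ≤ 1) :
    (s : ℂ) * x ∈ ball (0:ℂ) 1 := by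
  simp only [mem_ball, dist_zero_right]
  calc ‖(s:ℂ) * x‖ = |s| * ‖x‖ := by rw [norm_mul, Complex.norm_real, Real.norm_eq_abs]
    _ ≤ 1 * ‖x‖ := mul_le_mul_of_nonneg_right (by rwa [_root_.abs_of_nonneg h0]) (norm_nonneg _)
    _ = ‖x‖ := one_mul _
    _ < 1 := hx

/-- The primitive `z ↦ segInt ω 0 z` has derivative `ω` on the unit ball. -/
lemma hasDerivAt_segInt (ω : ℂ → ℂ)
    (hω : DifferentiableOn ℂ ω (ball (0 : ℂ) 1))
    (hbd : ∀ z ∈ ball (0 : ℂ) 1, ‖ω z‖ ≤ 1)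
    {z₀ : ℂ} (hz₀ : z₀ ∈ ball (0:ℂ) 1) :
    HasDerivAt (fun z => segInt ω 0 z) (ω z₀) z₀ := by
  have hωa : AnalyticOnNhd ℂ ω (ball (0:ℂ) 1) := hω.analyticOnNhd isOpen_ball
  have hωc : ContinuousOn ω (ball (0:ℂ) 1) := hω.continuousOn
  have hdc : ContinuousOn (deriv ω) (ball (0:ℂ) 1) := (hωa.deriv).continuousOn
  have hseg : (fun z => segInt ω 0 z) =
      fun z => ∫ s in (0:ℝ)..1, z * ω ((s:ℂ) * z) := by
    funext z
    rw [segInt, ← intervalIntegral.integral_const_mul]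
    simp only [sub_zero, zero_add]
  rw [hseg]
  simp only [mem_ball, dist_zero_right] at hz₀
  set r : ℝ := (1 + ‖z₀‖) / 2 with hr_def
  have hr1 : r < 1 := by rw [hr_def]; linarith
  have hzr : ‖z₀‖ < r := by rw [hr_def]; linarith
  have hr0 : 0 ≤ r := le_of_lt (lt_of_le_of_lt (norm_nonneg z₀) hzr)
  set ε : ℝ := r - ‖z₀‖ with hε_def
  have hε : 0 < ε := by rw [hε_def]; linarith
  have hxr : ∀ x ∈ ball z₀ ε, ‖x‖ ≤ r := by
    intro x hx
    calc ‖x‖ = ‖z₀ + (x - z₀)‖ := by ring_nf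
      _ ≤ ‖z₀‖ + ‖x - z₀‖ := norm_add_le _ _
      _ ≤ ‖z₀‖ + ε := by linarith [(mem_ball_iff_norm.mp hx).le]
      _ = r := by rw [hε_def]; ring
  have hx1 : ∀ x ∈ ball z₀ ε, ‖x‖ < 1 := fun x hx => lt_of_le_of_lt (hxr x hx) hr1
  -- uniform bound for deriv ω on closedBall 0 r
  obtain ⟨C, hC⟩ : ∃ C : ℝ, ∀ y ∈ closedBall (0:ℂ) r, ‖deriv ω y‖ ≤ C :=
    (isCompact_closedBall (0:ℂ) r).exists_bound_of_continuousOn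
      (hdc.mono (fun y hy => by
        simp only [mem_closedBall, dist_zero_right] at hy
        simp only [mem_ball, dist_zero_right]
        exact lt_of_le_of_lt hy hr1))
  have hC0 : 0 ≤ C := le_trans (norm_nonneg _) (hC 0 (by simp [hr0]))
  have hmemr : ∀ x ∈ ball z₀ ε, ∀ s : ℝ, 0 ≤ s → s ≤ 1 → (s:ℂ) * x ∈ closedBall (0:ℂ) r := by
    intro x hx s h0 h1
    simp only [mem_closedBall, dist_zero_right]
    calc ‖(s:ℂ) * x‖ = |s| * ‖x‖ := by rw [norm_mul, Complex.norm_real, Real.norm_eq_abs]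
      _ ≤ 1 * r := mul_le_mul (by rwa [_root_.abs_of_nonneg h0]) (hxr x hx) (norm_nonneg _) zero_le_one
      _ = r := one_mul r
  set F' : ℂ → ℝ → ℂ := fun x s => ω ((s:ℂ) * x) + x * (deriv ω ((s:ℂ) * x) * (s:ℂ)) with hF'
  -- continuity helpers
  have hcontF : ∀ x : ℂ, ‖x‖ < 1 →
      ContinuousOn (fun s : ℝ => x * ω ((s:ℂ) * x)) (Set.Icc 0 1) := by
    intro x hx
    apply ContinuousOn.mul continuousOn_const
    apply hωc.comp ((Complex.continuous_ofReal.mul continuous_const).continuousOn)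
    intro s hs
    exact seg_mem_ball hx hs.1 hs.2
  have hcontF' : ContinuousOn (fun s : ℝ => F' z₀ s) (Set.Icc 0 1) := by
    apply ContinuousOn.add
    · apply hωc.comp ((Complex.continuous_ofReal.mul continuous_const).continuousOn)
      intro s hs
      exact seg_mem_ball hz₀ hs.1 hs.2
    · apply ContinuousOn.mul continuousOn_const
      apply ContinuousOn.mul _ (Complex.continuous_ofReal.continuousOn)
      apply hdc.comp ((Complex.continuous_ofReal.mul continuous_const).continuousOn)
      intro s hs
      exact seg_mem_ball hz₀ hs.1 hs.2
  have key := intervalIntegral.hasDerivAt_integral_of_dominated_loc_of_deriv_le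
    (F := fun x s => x * ω ((s:ℂ) * x)) (F' := F') (x₀ := z₀)
    (bound := fun _ => 1 + C) (μ := MeasureTheory.volume) (a := 0) (b := 1) (ball_mem_nhds z₀ hε)
    ?_ ?_ ?_ ?_ ?_ ?_
  · obtain ⟨-, hd⟩ := key
    refine hd.congr_deriv ?_
    -- show ω z₀ = ∫ s in 0..1, F' z₀ s using FTC
    have hfun : (fun s : ℝ => ω ((s:ℂ) * z₀) + (s:ℂ) * (deriv ω ((s:ℂ) * z₀) * z₀)) =
        fun s => F' z₀ s := by
      funext s; rw [hF']; ring
    have hFTC : ∫ s in (0:ℝ)..1,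
        (ω ((s:ℂ) * z₀) + (s:ℂ) * (deriv ω ((s:ℂ) * z₀) * z₀)) =
        ((1:ℝ):ℂ) * ω (((1:ℝ):ℂ) * z₀) - ((0:ℝ):ℂ) * ω (((0:ℝ):ℂ) * z₀) := by
      apply intervalIntegral.integral_eq_sub_of_hasDerivAt (f := fun t : ℝ => ((t:ℂ)) * ω ((t:ℂ) * z₀))
      · intro s hs
        rw [Set.uIcc_of_le zero_le_one] at hs
        have hsz : (s:ℂ) * z₀ ∈ ball (0:ℂ) 1 := seg_mem_ball hz₀ hs.1 hs.2
        have hωd : HasDerivAt ω (deriv ω ((s:ℂ) * z₀)) ((s:ℂ) * z₀) :=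
          (hω.differentiableAt (isOpen_ball.mem_nhds hsz)).hasDerivAt
        have hmul : HasDerivAt (fun w : ℂ => w * z₀) z₀ (s:ℂ) := by
          simpa using (hasDerivAt_id (s:ℂ)).mul_const z₀
        have h1 : HasDerivAt (fun w : ℂ => ω (w * z₀))
            (deriv ω ((s:ℂ) * z₀) * z₀) (s:ℂ) := by
          simpa [Function.comp_def] using HasDerivAt.comp (s:ℂ) hωd hmul
        have h2 : HasDerivAt (fun t : ℝ => ω ((t:ℂ) * z₀))
            (deriv ω ((s:ℂ) * z₀) * z₀) s := h1.comp_ofReal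
        have h3 : HasDerivAt (fun t : ℝ => ((t:ℂ))) 1 s := by
          simpa using (hasDerivAt_id s).ofReal_comp
        simpa [Pi.mul_def] using h3.mul h2
      · rw [hfun]
        apply ContinuousOn.intervalIntegrable
        rw [Set.uIcc_of_le (zero_le_one : (0:ℝ) ≤ 1)]
        exact hcontF'
    rw [hfun] at hFTC
    rw [hFTC]
    simp
  · -- hF_meas
    filter_upwards [ball_mem_nhds z₀ hε] with x hx
    apply ContinuousOn.aestronglyMeasurable _ measurableSet_uIoc
    exact (hcontF x (hx1 x hx)).mono (by rw [Set.uIoc_of_le zero_le_one]; exact Set.Ioc_subset_Icc_self)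
  · -- hF_int
    apply ContinuousOn.intervalIntegrable
    rw [Set.uIcc_of_le (zero_le_one : (0:ℝ) ≤ 1)]
    exact hcontF z₀ hz₀
  · -- hF'_meas
    apply ContinuousOn.aestronglyMeasurable _ measurableSet_uIoc
    exact hcontF'.mono (by rw [Set.uIoc_of_le zero_le_one]; exact Set.Ioc_subset_Icc_self)
  · -- h_bound
    apply MeasureTheory.ae_of_all
    intro s hs x hx
    rw [Set.uIoc_of_le zero_le_one] at hs
    have hs0 : 0 ≤ s := hs.1.le
    have hsz : (s:ℂ) * x ∈ ball (0:ℂ) 1 := seg_mem_ball (hx1 x hx) hs0 hs.2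
    have hωb : ‖ω ((s:ℂ) * x)‖ ≤ 1 := hbd _ hsz
    have hdb : ‖deriv ω ((s:ℂ) * x)‖ ≤ C := hC _ (hmemr x hx s hs0 hs.2)
    calc ‖F' x s‖ ≤ ‖ω ((s:ℂ) * x)‖ + ‖x * (deriv ω ((s:ℂ) * x) * (s:ℂ))‖ := norm_add_le _ _
      _ ≤ 1 + C := by
          apply add_le_add hωb
          rw [norm_mul, norm_mul, Complex.norm_real, Real.norm_eq_abs]
          calc ‖x‖ * (‖deriv ω ((s:ℂ) * x)‖ * |s|) ≤ 1 * (C * 1) := by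
                apply mul_le_mul (hx1 x hx).le _ (by positivity) zero_le_one
                exact mul_le_mul hdb (by rw [_root_.abs_of_nonneg hs0]; exact hs.2)
                  (abs_nonneg s) hC0
            _ = C := by ring
  · -- bound_integrable
    exact intervalIntegrable_const
  · -- h_diff
    apply MeasureTheory.ae_of_all
    intro s hs x hx
    rw [Set.uIoc_of_le zero_le_one] at hs
    have hsz : (s:ℂ) * x ∈ ball (0:ℂ) 1 := seg_mem_ball (hx1 x hx) hs.1.le hs.2
    have hωd : HasDerivAt ω (deriv ω ((s:ℂ) * x)) ((s:ℂ) * x) :=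
      (hω.differentiableAt (isOpen_ball.mem_nhds hsz)).hasDerivAt
    have h1 : HasDerivAt (fun y : ℂ => ω ((s:ℂ) * y))
        (deriv ω ((s:ℂ) * x) * (s:ℂ)) x := by
      have h0 : HasDerivAt (fun y : ℂ => (s:ℂ) * y) (s:ℂ) x := by
        simpa using (hasDerivAt_id x).const_mul (s:ℂ)
      simpa [Function.comp_def] using HasDerivAt.comp x hωd h0
    have := (hasDerivAt_id x).mul h1
    simpa [hF', Pi.mul_def] using this

/-- For `A(z) = 1 + c z - z ∫₀ᶻ ω(t) dt` with `|ω| ≤ 1` on the unit disk: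
`|z₁ A(z₂) - z₂ A(z₁)| ≥ (1 - |z₁ z₂|) |z₁ - z₂|` for `z₁, z₂` in the disk,
so (for `z₁ ≠ z₂` we get `z₁ A(z₂) ≠ z₂ A(z₁)`) the map `z ↦ z / A(z)` is
injective off the zeros of `A`. -/
theorem stmt_4 (ω : ℂ → ℂ) (c : ℂ)
    (hω : DifferentiableOn ℂ ω (ball (0 : ℂ) 1))
    (hbd : ∀ z ∈ ball (0 : ℂ) 1, ‖ω z‖ ≤ 1)
    (A : ℂ → ℂ)
    (hA : ∀ z ∈ ball (0 : ℂ) 1, A z = 1 + c * z - z * segInt ω 0 z) :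
    (∀ z₁ ∈ ball (0 : ℂ) 1, ∀ z₂ ∈ ball (0 : ℂ) 1,
        (1 - ‖z₁ * z₂‖) * ‖z₁ - z₂‖ ≤ ‖z₁ * A z₂ - z₂ * A z₁‖) ∧
      (∀ z₁ ∈ ball (0 : ℂ) 1, ∀ z₂ ∈ ball (0 : ℂ) 1,
        z₁ ≠ z₂ → z₁ * A z₂ ≠ z₂ * A z₁) ∧
      Set.InjOn (fun z => z / A z) {z ∈ ball (0 : ℂ) 1 | A z ≠ 0} := by
  set g : ℂ → ℂ := fun z => segInt ω 0 z with hg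
  -- Lipschitz bound on g via the mean value inequality
  have hlip : ∀ z₁ ∈ ball (0:ℂ) 1, ∀ z₂ ∈ ball (0:ℂ) 1, ‖g z₂ - g z₁‖ ≤ ‖z₂ - z₁‖ := by
    intro z₁ h₁ z₂ h₂
    have := Convex.norm_image_sub_le_of_norm_hasDerivWithin_le
      (f := g) (f' := ω) (s := ball (0:ℂ) 1) (C := 1)
      (fun x hx => (hasDerivAt_segInt ω hω hbd hx).hasDerivWithinAt)
      (fun x hx => hbd x hx) (convex_ball 0 1) h₁ h₂
    simpa using this
  have main : ∀ z₁ ∈ ball (0:ℂ) 1, ∀ z₂ ∈ ball (0:ℂ) 1,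
      (1 - ‖z₁ * z₂‖) * ‖z₁ - z₂‖ ≤ ‖z₁ * A z₂ - z₂ * A z₁‖ := by
    intro z₁ h₁ z₂ h₂
    have hkey : z₁ * A z₂ - z₂ * A z₁ = (z₁ - z₂) - z₁ * z₂ * (g z₂ - g z₁) := by
      rw [hA z₁ h₁, hA z₂ h₂, hg]; ring
    rw [hkey]
    have h1 : ‖z₁ - z₂‖ - ‖z₁ * z₂ * (g z₂ - g z₁)‖ ≤ ‖(z₁ - z₂) - z₁ * z₂ * (g z₂ - g z₁)‖ :=
      norm_sub_norm_le _ _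
    have h2 : ‖z₁ * z₂ * (g z₂ - g z₁)‖ ≤ ‖z₁ * z₂‖ * ‖z₁ - z₂‖ := by
      rw [norm_mul]
      have := hlip z₁ h₁ z₂ h₂
      calc ‖z₁ * z₂‖ * ‖g z₂ - g z₁‖ ≤ ‖z₁ * z₂‖ * ‖z₂ - z₁‖ :=
            mul_le_mul_of_nonneg_left this (norm_nonneg _)
        _ = ‖z₁ * z₂‖ * ‖z₁ - z₂‖ := by rw [norm_sub_rev]
    nlinarith [norm_nonneg (z₁ - z₂), norm_nonneg (z₁ * z₂)]
  have hneq : ∀ z₁ ∈ ball (0:ℂ) 1, ∀ z₂ ∈ ball (0:ℂ) 1,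
      z₁ ≠ z₂ → z₁ * A z₂ ≠ z₂ * A z₁ := by
    intro z₁ h₁ z₂ h₂ hne
    have hpos : 0 < (1 - ‖z₁ * z₂‖) * ‖z₁ - z₂‖ := by
      apply mul_pos
      · rw [norm_mul]
        have e₁ : ‖z₁‖ < 1 := by simpa [mem_ball, dist_zero_right] using h₁
        have e₂ : ‖z₂‖ < 1 := by simpa [mem_ball, dist_zero_right] using h₂
        nlinarith [norm_nonneg z₁, norm_nonneg z₂]
      · rw [norm_pos_iff]; exact sub_ne_zero_of_ne hne
    intro h
    have := main z₁ h₁ z₂ h₂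
    rw [h, sub_self, norm_zero] at this
    linarith
  refine ⟨main, hneq, ?_⟩
  intro z₁ h₁ z₂ h₂ heq
  simp only [Set.mem_setOf_eq] at h₁ h₂
  obtain ⟨hb₁, hA₁⟩ := h₁
  obtain ⟨hb₂, hA₂⟩ := h₂
  by_contra hne
  apply hneq z₁ hb₁ z₂ hb₂ hne
  simp only at heq
  field_simp at heq
  linear_combination heq
end

section
/- Let λ ∈ (0, 1], p ∈ (0, 1], let ω be holomorphic on the open unit disk D with |ω(z)| ≤ 1 for all z ∈ D, let c ∈ ℂ, and set A(z) = 1 + c·z − λ·z·∫₀ᶻ ω(t) dt (segment integral). Suppose there exists c₀ ∈ [0, 1) such that |∫₀ᶻ ω(t) dt| ≤ c₀·|z| for all z with |z| ≤ p, and suppose |c| = (1 + λ·p²)/p. Then, with r = (1 + λ·c₀·p²)/(1 + λ·p²) ∈ (0, 1), the function A has a zero z₀ with |z₀| ≤ p·r < p. (This is the step in the equality analysis of Theorem 3 showing that an extremal function must have |∫₀ᶻ ω(t) dt| = |z| somewhere on every circle, forcing ω to be a unimodular constant.) -/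
open Complex Metric

lemma segInt_zero_eq (ω : ℂ → ℂ) (z : ℂ) :
    segInt ω 0 z = z * ∫ s in (0:ℝ)..(1:ℝ), ω ((s : ℂ) * z) := by
  simp [segInt]

lemma segInt_diffOn (ω : ℂ → ℂ) (hω : DifferentiableOn ℂ ω (ball (0 : ℂ) 1)) :
    DifferentiableOn ℂ (fun z => segInt ω 0 z) (ball (0 : ℂ) 1) := by
  have han : AnalyticOnNhd ℂ ω (ball (0 : ℂ) 1) := hω.analyticOnNhd isOpen_ball
  have hdc : ContinuousOn (deriv ω) (ball (0 : ℂ) 1) :=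
    (han.deriv).continuousOn
  have hF : DifferentiableOn ℂ (fun z => ∫ s in (0:ℝ)..(1:ℝ), ω ((s : ℂ) * z))
      (ball (0 : ℂ) 1) := by
    intro z₀ hz₀
    rw [mem_ball_zero_iff] at hz₀
    set ρ : ℝ := (1 + ‖z₀‖) / 2 with hρ
    have hρ1 : ρ < 1 := by simp only [hρ]; linarith
    have hρ0 : 0 ≤ ρ := by positivity
    have hz₀ρ : ‖z₀‖ < ρ := by simp only [hρ]; linarith
    set ε : ℝ := ρ - ‖z₀‖ with hε
    have hε0 : 0 < ε := by simp only [hε]; linarith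
    -- bound on deriv ω on closedBall 0 ρ
    obtain ⟨C, hC⟩ := (isCompact_closedBall (0:ℂ) ρ).exists_bound_of_continuousOn
      (hdc.mono (closedBall_subset_ball hρ1))
    have hC0 : 0 ≤ C := le_trans (norm_nonneg _) (hC 0 (mem_closedBall_self hρ0))
    -- membership helper
    have hmem : ∀ x ∈ ball z₀ ε, ∀ t : ℝ, t ∈ Set.uIcc (0:ℝ) 1 → (t : ℂ) * x ∈ ball (0:ℂ) 1 := by
      intro x hx t ht
      rw [mem_ball_zero_iff]
      have hx' : ‖x‖ < ρ := by
        have := mem_ball_iff_norm.mp hx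
        calc ‖x‖ ≤ ‖x - z₀‖ + ‖z₀‖ := by have := norm_le_norm_add_norm_sub' x z₀; linarith
        _ < ε + ‖z₀‖ := by linarith
        _ = ρ := by simp [hε]
      have ht' : |t| ≤ 1 := by
        rw [Set.uIcc_of_le (by norm_num : (0:ℝ) ≤ 1)] at ht
        rw [abs_le]; exact ⟨by linarith [ht.1], ht.2⟩
      calc ‖(t : ℂ) * x‖ = |t| * ‖x‖ := by simp [norm_mul]
      _ ≤ 1 * ‖x‖ := by
          apply mul_le_mul_of_nonneg_right ht' (norm_nonneg _)
      _ < 1 := by simpa using lt_of_lt_of_le hx' hρ1.le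
    have hcont : ∀ x ∈ ball z₀ ε, ContinuousOn (fun t : ℝ => ω ((t : ℂ) * x))
        (Set.uIcc (0:ℝ) 1) := by
      intro x hx
      apply (hω.continuousOn).comp
      · exact (Complex.continuous_ofReal.mul continuous_const).continuousOn
      · intro t ht; exact hmem x hx t ht
    have key := intervalIntegral.hasDerivAt_integral_of_dominated_loc_of_deriv_le
      (F := fun (x : ℂ) (t : ℝ) => ω ((t:ℂ) * x))
      (F' := fun (x : ℂ) (t : ℝ) => (t : ℂ) * deriv ω ((t:ℂ) * x))
      (x₀ := z₀) (a := (0:ℝ)) (b := 1) (bound := fun _ => C) (μ := MeasureTheory.volume) (ball_mem_nhds z₀ hε0)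
      ?_ ?_ ?_ ?_ ?_ ?_
    · exact key.2.differentiableAt.differentiableWithinAt
    · -- measurability eventually
      filter_upwards [ball_mem_nhds z₀ hε0] with x hx
      exact ((hcont x hx).mono Set.uIoc_subset_uIcc).aestronglyMeasurable measurableSet_uIoc
    · exact (hcont z₀ (mem_ball_self hε0)).intervalIntegrable
    · -- F' z₀ measurable
      have : ContinuousOn (fun t : ℝ => (t : ℂ) * deriv ω ((t:ℂ) * z₀)) (Set.uIcc (0:ℝ) 1) := by
        apply ContinuousOn.mul
        · exact (Complex.continuous_ofReal).continuousOn
        · apply hdc.comp ((Complex.continuous_ofReal.mul continuous_const).continuousOn)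
          intro t ht; exact hmem z₀ (mem_ball_self hε0) t ht
      exact (this.mono Set.uIoc_subset_uIcc).aestronglyMeasurable measurableSet_uIoc
    · -- bound
      apply Filter.Eventually.of_forall
      intro t ht x hx
      have h1 : (t:ℂ) * x ∈ ball (0:ℂ) 1 := hmem x hx t (Set.uIoc_subset_uIcc ht)
      have ht' : |t| ≤ 1 := by
        rw [Set.uIoc_of_le (by norm_num : (0:ℝ) ≤ 1)] at ht
        rw [abs_le]; exact ⟨by linarith [ht.1.le], ht.2⟩
      have h2 : (t:ℂ) * x ∈ closedBall (0:ℂ) ρ := by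
        rw [mem_closedBall_zero_iff]
        have hx' : ‖x‖ < ρ := by
          have := mem_ball_iff_norm.mp hx
          calc ‖x‖ ≤ ‖x - z₀‖ + ‖z₀‖ := by have := norm_le_norm_add_norm_sub' x z₀; linarith
          _ < ε + ‖z₀‖ := by linarith
          _ = ρ := by simp [hε]
        calc ‖(t : ℂ) * x‖ = |t| * ‖x‖ := by simp [norm_mul]
        _ ≤ 1 * ρ := mul_le_mul ht' hx'.le (norm_nonneg _) (by norm_num)
        _ = ρ := one_mul ρ
      calc ‖(t:ℂ) * deriv ω ((t:ℂ)*x)‖ = |t| * ‖deriv ω ((t:ℂ)*x)‖ := by simp [norm_mul]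
      _ ≤ 1 * C := mul_le_mul ht' (hC _ h2) (norm_nonneg _) (by norm_num)
      _ = C := one_mul C
    · exact intervalIntegrable_const
    · -- differentiability
      apply Filter.Eventually.of_forall
      intro t ht x hx
      have h1 : (t:ℂ) * x ∈ ball (0:ℂ) 1 := hmem x hx t (Set.uIoc_subset_uIcc ht)
      have hωd : HasDerivAt ω (deriv ω ((t:ℂ)*x)) ((t:ℂ)*x) :=
        (hω.differentiableAt (isOpen_ball.mem_nhds h1)).hasDerivAt
      have hin : HasDerivAt (fun y : ℂ => (t:ℂ) * y) (t:ℂ) x := by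
        simpa using (hasDerivAt_id x).const_mul (t:ℂ)
      have := hωd.comp x hin
      simpa [Function.comp_def, mul_comm] using this
  -- now z * F z
  have : DifferentiableOn ℂ (fun z => z * ∫ s in (0:ℝ)..(1:ℝ), ω ((s : ℂ) * z))
      (ball (0:ℂ) 1) := (differentiable_id.differentiableOn).mul hF
  exact this.congr (fun z _ => segInt_zero_eq ω z)

/-- Equality analysis in Theorem 3: if `|∫₀ᶻ ω(t) dt| ≤ c₀ |z|` on `{|z| ≤ p}`
for some `c₀ ∈ [0,1)`, and `|c| = (1 + λ p²)/p`, then with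
`r = (1 + λ c₀ p²)/(1 + λ p²) ∈ (0,1)` the function
`A(z) = 1 + c z - λ z ∫₀ᶻ ω(t) dt` has a zero `z₀` with `|z₀| ≤ p r < p`. -/
theorem stmt_14 (lam p : ℝ) (hlam : lam ∈ Set.Ioc (0 : ℝ) 1)
    (hp : p ∈ Set.Ioc (0 : ℝ) 1)
    (ω : ℂ → ℂ) (c : ℂ)
    (hω : DifferentiableOn ℂ ω (ball (0 : ℂ) 1))
    (hbd : ∀ z ∈ ball (0 : ℂ) 1, ‖ω z‖ ≤ 1)
    (c₀ : ℝ) (hc₀ : c₀ ∈ Set.Ico (0 : ℝ) 1)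
    (hsmall : ∀ z : ℂ, ‖z‖ ≤ p → ‖segInt ω 0 z‖ ≤ c₀ * ‖z‖)
    (hc : ‖c‖ = (1 + lam * p ^ 2) / p)
    (A : ℂ → ℂ)
    (hA : ∀ z ∈ ball (0 : ℂ) 1, A z = 1 + c * z - (lam : ℂ) * z * segInt ω 0 z) :
    (1 + lam * c₀ * p ^ 2) / (1 + lam * p ^ 2) ∈ Set.Ioo (0 : ℝ) 1 ∧
      p * ((1 + lam * c₀ * p ^ 2) / (1 + lam * p ^ 2)) < p ∧
      ∃ z₀ : ℂ, ‖z₀‖ ≤ p * ((1 + lam * c₀ * p ^ 2) / (1 + lam * p ^ 2)) ∧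
        A z₀ = 0 := by
  obtain ⟨hlam0, hlam1⟩ := hlam
  obtain ⟨hp0, hp1⟩ := hp
  obtain ⟨hc₀0, hc₀1⟩ := hc₀
  set r : ℝ := (1 + lam * c₀ * p ^ 2) / (1 + lam * p ^ 2) with hrdef
  have hD0 : 0 < 1 + lam * p ^ 2 := by nlinarith
  have hN0 : 0 < 1 + lam * c₀ * p ^ 2 := by nlinarith
  have hr0 : 0 < r := div_pos hN0 hD0
  have hr1 : r < 1 := by
    rw [hrdef, div_lt_one hD0]
    nlinarith [mul_pos (mul_pos hlam0 (sub_pos.mpr hc₀1)) (pow_pos hp0 2)]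
  have hpr : p * r < p := by nlinarith [mul_pos hp0 (sub_pos.mpr hr1)]
  have hcn : ‖c‖ ≠ 0 := by rw [hc]; positivity
  have hc_ne : c ≠ 0 := by simpa using hcn
  refine ⟨⟨hr0, hr1⟩, hpr, ?_⟩
  set R : ℝ := p * r with hRdef
  have hR0 : 0 < R := by positivity
  have hRp : R < p := hpr
  have hR1 : R < 1 := lt_of_lt_of_le hRp hp1
  by_cases hc₀z : c₀ = 0
  · -- trivial case: the integral vanishes on the disk of radius p
    have hnorm : ‖-c⁻¹‖ = p / (1 + lam * p ^ 2) := by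
      rw [norm_neg, norm_inv, hc, inv_div]
    have h1 : p * r = p / (1 + lam * p ^ 2) := by
      rw [hrdef, hc₀z]; ring
    refine ⟨-c⁻¹, ?_, ?_⟩
    · rw [hnorm, ← h1]
    · 
      have hle : ‖-c⁻¹‖ ≤ p := by
        rw [hnorm, div_le_iff₀ hD0]
        nlinarith [mul_pos hp0 (mul_pos hlam0 (pow_pos hp0 2))]
      have hlt : ‖-c⁻¹‖ < 1 := by
        rw [hnorm, div_lt_one hD0]
        nlinarith [mul_pos hlam0 (pow_pos hp0 2)]
      have hball : -c⁻¹ ∈ ball (0:ℂ) 1 := mem_ball_zero_iff.mpr hlt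
      have hS : segInt ω 0 (-c⁻¹) = 0 := by
        have := hsmall (-c⁻¹) hle
        rw [hc₀z, zero_mul] at this
        exact norm_le_zero_iff.mp this
      rw [hA _ hball, hS]
      field_simp
      ring
  · have hc₀p : 0 < c₀ := lt_of_le_of_ne hc₀0 (Ne.symm hc₀z)
    by_contra hcon
    push_neg at hcon
    have hAne : ∀ z ∈ closedBall (0:ℂ) R, A z ≠ 0 := by
      intro z hz
      exact hcon z (mem_closedBall_zero_iff.mp hz)
    -- differentiability of A
    have hSd : DifferentiableOn ℂ (fun z => segInt ω 0 z) (ball (0 : ℂ) 1) :=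
      segInt_diffOn ω hω
    have hEd : DifferentiableOn ℂ
        (fun z => 1 + c * z - (lam : ℂ) * z * segInt ω 0 z) (ball (0:ℂ) 1) := by
      apply DifferentiableOn.sub
      · exact (differentiableOn_const _).add ((differentiableOn_const _).mul differentiable_id.differentiableOn)
      · exact (((differentiableOn_const _).mul differentiable_id.differentiableOn)).mul hSd
    have hAd : DifferentiableOn ℂ A (ball (0:ℂ) 1) := hEd.congr hA
    have hAan : AnalyticOnNhd ℂ A (ball (0:ℂ) 1) := hAd.analyticOnNhd isOpen_ball
    have hA'c : ContinuousOn (deriv A) (ball (0:ℂ) 1) := (hAan.deriv).continuousOn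
    have hsub : closedBall (0:ℂ) R ⊆ ball (0:ℂ) 1 :=
      (closedBall_subset_ball hR1)
    -- Goursat: the logarithmic derivative integrates to zero
    set f : ℂ → ℂ := fun z => deriv A z / A z with hfdef
    have hfc : ContinuousOn f (closedBall (0:ℂ) R) :=
      ((hA'c.mono hsub).div (hAd.continuousOn.mono hsub) hAne)
    have Hf : (∮ z in C((0:ℂ), R), f z) = 0 := by
      apply circleIntegral_eq_zero_of_differentiable_on_off_countable hR0.le
        Set.countable_empty hfc
      intro z hz
      have hz1 : z ∈ ball (0:ℂ) 1 := ball_subset_ball hR1.le hz.1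
      have h1 : DifferentiableAt ℂ (deriv A) z := ((hAan.deriv) z hz1).differentiableAt
      have h2 : DifferentiableAt ℂ A z := hAd.differentiableAt (isOpen_ball.mem_nhds hz1)
      exact h1.div h2 (hAne z (ball_subset_closedBall hz.1))
    set w : ℂ := -c⁻¹ with hwdef
    have hwnorm : ‖w‖ = p / (1 + lam * p ^ 2) := by
      rw [hwdef, norm_neg, norm_inv, hc, inv_div]
    have hw : w ∈ ball (0:ℂ) R := by
      rw [mem_ball_zero_iff, hwnorm, hRdef]
      have h6 : p * r = (p * (1 + lam * c₀ * p ^ 2)) / (1 + lam * p ^ 2) := by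
        rw [hrdef]; ring
      rw [h6, div_lt_div_iff₀ hD0 hD0]
      nlinarith [mul_pos (mul_pos hp0 hD0) (mul_pos (mul_pos hlam0 hc₀p) (pow_pos hp0 2))]
    have Hw : (∮ z in C((0:ℂ), R), (z - w)⁻¹) = 2 * Real.pi * I :=
      circleIntegral.integral_sub_inv_of_mem_ball hw
    -- the function on the sphere
    set f' : ℂ → ℂ := fun z => deriv A z / A z - (z - w)⁻¹ with hf'def
    have Hsph : ∀ z ∈ sphere (0:ℂ) R,
        HasDerivWithinAt (fun z => Complex.log (A z / (1 + c*z))) (f' z) (sphere (0:ℂ) R) z := by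
      intro z hz
      have hzR : ‖z‖ = R := mem_sphere_zero_iff_norm.mp hz
      have hz1 : z ∈ ball (0:ℂ) 1 := by rw [mem_ball_zero_iff, hzR]; exact hR1
      have hzcb : z ∈ closedBall (0:ℂ) R := by rw [mem_closedBall_zero_iff, hzR]
      have hAz : A z ≠ 0 := hAne z hzcb
      have hcznorm : ‖c * z‖ = 1 + lam * c₀ * p ^ 2 := by
        rw [norm_mul, hc, hzR, hRdef, hrdef]
        field_simp
      have hLlb : lam * c₀ * p ^ 2 ≤ ‖1 + c * z‖ := by
        have h1 : ‖c * z‖ - ‖(-1 : ℂ)‖ ≤ ‖c * z - (-1)‖ := norm_sub_norm_le _ _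
        rw [norm_neg, norm_one, hcznorm] at h1
        have h2 : c * z - (-1) = 1 + c * z := by ring
        rw [h2] at h1; linarith
      have hL0 : 0 < lam * c₀ * p ^ 2 := by positivity
      have hLne : (1 + c * z) ≠ 0 := by
        intro h; rw [h, norm_zero] at hLlb; linarith
      have hALdiff : ‖A z - (1 + c * z)‖ ≤ lam * c₀ * p ^ 2 * r ^ 2 := by
        rw [hA z hz1]
        have h3 : 1 + c * z - (lam:ℂ) * z * segInt ω 0 z - (1 + c * z)
            = -((lam:ℂ) * z * segInt ω 0 z) := by ring
        rw [h3, norm_neg, norm_mul, norm_mul]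
        have h4 : ‖segInt ω 0 z‖ ≤ c₀ * R := by
          have := hsmall z (by rw [hzR]; exact hRp.le)
          rw [hzR] at this; exact this
        have h5 : ‖(lam : ℂ)‖ = lam := by
          rw [Complex.norm_real, Real.norm_eq_abs, abs_of_pos hlam0]
        rw [h5, hzR]
        calc lam * R * ‖segInt ω 0 z‖ ≤ lam * R * (c₀ * R) := by
              apply mul_le_mul_of_nonneg_left h4; positivity
        _ = lam * c₀ * p ^ 2 * r ^ 2 := by rw [hRdef]; ring
      have hALlt : ‖A z - (1 + c * z)‖ < ‖1 + c * z‖ := by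
        apply lt_of_le_of_lt hALdiff
        apply lt_of_lt_of_le _ hLlb
        have : r ^ 2 < 1 := by nlinarith
        nlinarith
      have hum1 : ‖A z / (1 + c * z) - 1‖ < 1 := by
        rw [div_sub_one hLne, norm_div]
        rw [div_lt_one (lt_of_le_of_lt (norm_nonneg _) hALlt)]
        exact hALlt
      have hslit : A z / (1 + c * z) ∈ slitPlane := by
        have := mem_slitPlane_of_norm_lt_one hum1
        simpa using this
      -- derivatives
      have hAder : HasDerivAt A (deriv A z) z :=
        (hAd.differentiableAt (isOpen_ball.mem_nhds hz1)).hasDerivAt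
      have hLder : HasDerivAt (fun z => 1 + c * z) c z := by
        simpa using ((hasDerivAt_id z).const_mul c).const_add 1
      have hu : HasDerivAt (fun z => A z / (1 + c * z))
          ((deriv A z * (1 + c * z) - A z * c) / (1 + c * z) ^ 2) z :=
        hAder.div hLder hLne
      have hlog := hu.clog hslit
      have heq : (deriv A z * (1 + c * z) - A z * c) / (1 + c * z) ^ 2
          / (A z / (1 + c * z)) = f' z := by
        show _ = deriv A z / A z - (z - w)⁻¹
        have hzw : z - w = (1 + c * z) / c := by
          rw [hwdef]; field_simp; ring
        rw [hzw]
        field_simp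
      rw [heq] at hlog
      exact hlog.hasDerivWithinAt
    have Hf' : (∮ z in C((0:ℂ), R), f' z) = 0 :=
      circleIntegral.integral_eq_zero_of_hasDerivWithinAt hR0.le Hsph
    -- combine
    have hfi : CircleIntegrable f 0 R :=
      (hfc.mono sphere_subset_closedBall).circleIntegrable hR0.le
    have hwi : CircleIntegrable (fun z => (z - w)⁻¹) 0 R := by
      rw [circleIntegrable_sub_inv_iff]
      right
      intro h
      have h1 := mem_sphere_zero_iff_norm.mp h
      have h2 := mem_ball_zero_iff.mp hw
      rw [h1, abs_of_pos hR0] at h2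
      exact lt_irrefl _ h2
    have hsplit := circleIntegral.integral_sub hfi hwi
    rw [hf'def] at Hf'
    rw [Hf, Hw] at hsplit
    rw [hsplit] at Hf'
    have : (2 * Real.pi * I : ℂ) = 0 := by linear_combination -Hf'
    simp [Real.pi_ne_zero, Complex.I_ne_zero] at this
end
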